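/- (Partition refinement decreases intersection probabilities) Let I = {(i,j) : 1 ≤ i ≤ n, 1 ≤ j ≤ r_i} and let S be a partition of I such that each block of S contains at most one element from each row {(i,1),…,(i,r_i)} (the self-avoiding condition). Let S′ be any refinement of S that also satisfies this condition — in particular any partition obtained from S by repeatedly splitting a block into two nonempty parts. For a partition P of I, let (t_B : B ∈ P) be i.i.d. random variables with distribution ν on [0,∞), and define P^{(P)} := P( ⋂_{i=1}^n { Σ_{j=1}^{r_i} t_{π_P(i,j)} ≥ t } ), where π_P(i,j) is the block of P containing (i,j). Then for every t ≥ 0, P^{(S)} ≥ P^{(S′)}. -/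

import Mathlib

open MeasureTheory ProbabilityTheory Filter Topology Pointwise

namespace FPPCL

/-- A multigraph: loops and parallel edges allowed. Edges are unoriented,
recorded by their (unordered) pair of endpoints. -/
structure Multigraph where
  V : Type
  E : Type
  ends : E → Sym2 V

namespace Multigraph

/-- A walk in a multigraph, recorded as a sequence of edges together with
compatible endpoints. -/
inductive Walk (G : Multigraph) : G.V → G.V → Type
  | nil (v : G.V) : Walk G v v
  | cons {u v w : G.V} (e : G.E) (h : G.ends e = s(u, v)) (p : Walk G v w) : Walk G u w

/-- The list of edges traversed by a walk. -/
def Walk.edges {G : Multigraph} : {u v : G.V} → G.Walk u v → List G.E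
  | _, _, .nil _ => []
  | _, _, .cons e _ p => e :: Walk.edges p

/-- A multigraph is connected if any two vertices are joined by a walk. -/
def Connected (G : Multigraph) : Prop := ∀ x y : G.V, Nonempty (G.Walk x y)

/-- A finite set of edges separates the graph if some pair of vertices cannot be
joined by a walk avoiding it. -/
def Separates (G : Multigraph) (S : Finset G.E) : Prop :=
  ∃ x y : G.V, ∀ p : G.Walk x y, ∃ e ∈ p.edges, e ∈ S

/-- The edge connectivity: the minimal size of a separating set of edges. -/
noncomputable def edgeConn (G : Multigraph) : ℕ :=
  sInf {n | ∃ S : Finset G.E, S.card = n ∧ G.Separates S}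

end Multigraph

/-- The passage time of a walk for a configuration `t` of edge times. -/
noncomputable def walkTime {G : Multigraph} (t : G.E → NNReal) {u v : G.V}
    (p : G.Walk u v) : NNReal :=
  (p.edges.map t).sum

/-- The first passage time between two vertices: the infimum of passage times over
all walks joining them (`∞` if there is none). -/
noncomputable def fpt {G : Multigraph} (t : G.E → NNReal) (u v : G.V) : ENNReal :=
  ⨅ p : G.Walk u v, (walkTime t p : ENNReal)

/-- A crystal structure of dimension `d` on a multigraph: a free action of the free
abelian group `ℤ^d` by graph automorphisms with finite quotient graph. -/
structure CrystalStructure (d : ℕ) (G : Multigraph) where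
  vact : (Fin d → ℤ) → G.V → G.V
  eact : (Fin d → ℤ) → G.E → G.E
  vact_zero : ∀ x, vact 0 x = x
  vact_add : ∀ σ τ x, vact (σ + τ) x = vact σ (vact τ x)
  eact_zero : ∀ e, eact 0 e = e
  eact_add : ∀ σ τ e, eact (σ + τ) e = eact σ (eact τ e)
  ends_eact : ∀ σ e, G.ends (eact σ e) = (G.ends e).map (vact σ)
  free : ∀ σ x, vact σ x = x → σ = 0
  conn : G.Connected
  finV : Finite (Quot fun x y : G.V => ∃ σ, vact σ x = y)
  finE : Finite (Quot fun e f : G.E => ∃ σ, eact σ e = f)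

/-- A periodic realization of a `d`-dimensional crystal lattice: a placement of the
vertices in `ℝ^d` that is equivariant, via an injective period homomorphism `ρ` onto
a lattice group (spanned over `ℤ` by a basis of `ℝ^d`), with the crystal action. -/
structure PeriodicRealization (d : ℕ) (G : Multigraph) (C : CrystalStructure d G) where
  Φ : G.V → EuclideanSpace ℝ (Fin d)
  basis : Module.Basis (Fin d) ℝ (EuclideanSpace ℝ (Fin d))
  periodic : ∀ σ x, Φ (C.vact σ x) = Φ x + ∑ i, (σ i : ℝ) • basis i

namespace PeriodicRealization

variable {d : ℕ} {G : Multigraph} {C : CrystalStructure d G}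

/-- The period homomorphism `ρ : L → ℝ^d` of a periodic realization. -/
noncomputable def ρ (R : PeriodicRealization d G C) (σ : Fin d → ℤ) :
    EuclideanSpace ℝ (Fin d) :=
  ∑ i, (σ i : ℝ) • R.basis i

/-- The lattice group `Γ = ρ(L)`. -/
def Γ (R : PeriodicRealization d G C) : Set (EuclideanSpace ℝ (Fin d)) :=
  Set.range R.ρ

/-- A realization is nondegenerate if it is injective on vertices. -/
def Nondegenerate (R : PeriodicRealization d G C) : Prop :=
  Function.Injective R.Φ

/-- The set `D` of rational points: points with some positive integer multiple in `Γ`. -/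
def ratPoints (R : PeriodicRealization d G C) : Set (EuclideanSpace ℝ (Fin d)) :=
  {x | ∃ N : ℕ, 0 < N ∧ (N : ℝ) • x ∈ R.Γ}

/-- `v` is a realized vertex closest to the point `x`. -/
def IsClosest (R : PeriodicRealization d G C) (x : EuclideanSpace ℝ (Fin d))
    (v : G.V) : Prop :=
  ∀ w : G.V, dist (R.Φ v) x ≤ dist (R.Φ w) x

end PeriodicRealization

/-- The `k`-th moment of the minimum of `l` i.i.d. random times with distribution `ν`. -/
noncomputable def minMoment (ν : Measure NNReal) (l k : ℕ) : ENNReal :=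
  ∫⁻ f, (⨅ i : Fin l, (f i : ENNReal)) ^ k ∂(Measure.pi fun _ : Fin l => ν)

/-- The `L¹`-norm of a point of `ℝ^d`. -/
noncomputable def l1 {d : ℕ} (x : EuclideanSpace ℝ (Fin d)) : ℝ := ∑ i, |x i|

/-- In a bond configuration `η`, the open cluster of `x` is infinite. -/
def PercolatesFrom {G : Multigraph} (η : G.E → Prop) (x : G.V) : Prop :=
  {y : G.V | ∃ p : G.Walk x y, ∀ e ∈ p.edges, η e}.Infinite

/-- The critical probability of Bernoulli bond percolation on a multigraph: the
supremum of the parameters `p` for which every i.i.d. Bernoulli(`p`) bond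
configuration almost surely has no infinite cluster. -/
noncomputable def bondPc (G : Multigraph) : ℝ :=
  sSup {p : ℝ | 0 ≤ p ∧ p ≤ 1 ∧
    ∀ (Ω : Type) (_ : MeasureSpace Ω), IsProbabilityMeasure (volume : Measure Ω) →
    ∀ η : G.E → Ω → Bool,
      iIndepFun η (volume : Measure Ω) →
      (∀ e, volume {ω | η e ω = true} = ENNReal.ofReal p) →
      volume {ω | ∃ x : G.V, PercolatesFrom (fun e => η e ω = true) x} = 0}

end FPPCL

namespace FPPCL
open Finset Function
open scoped ENNReal NNReal


variable {n : ℕ} {r : Fin n → ℕ}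

/-- The intersection event. -/
def evt {ι : Type*} [Fintype ι] (g : ∀ i : Fin n, Fin (r i) → ι) (t : NNReal) :
    Set (ι → NNReal) :=
  {f | ∀ i, t ≤ ∑ j, f (g i j)}

lemma measurable_evt {ι : Type*} [Fintype ι] (g : ∀ i : Fin n, Fin (r i) → ι) (t : NNReal) :
    MeasurableSet (evt g t) := by
  have : evt g t = ⋂ i, {f : ι → NNReal | t ≤ ∑ j, f (g i j)} := by
    ext f; simp [evt, Set.mem_iInter]
  rw [this]
  refine MeasurableSet.iInter fun i => ?_
  have hm : Measurable fun f : ι → NNReal => ∑ j, f (g i j) :=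
    Finset.measurable_sum _ fun j _ => measurable_pi_apply _
  exact measurableSet_le measurable_const hm

lemma map_pi_comp {ι κ : Type*} [Fintype ι] [Fintype κ] (ν : Measure NNReal)
    [IsProbabilityMeasure ν] {e : κ → ι} (he : Function.Injective e) :
    Measure.map (fun f : ι → NNReal => f ∘ e) (Measure.pi fun _ : ι => ν)
      = Measure.pi fun _ : κ => ν := by
  classical
  refine (Measure.pi_eq (μ := fun _ : κ => ν) fun s hs => ?_).symm
  have hmeas : Measurable fun f : ι → NNReal => f ∘ e :=
    measurable_pi_iff.mpr fun k => measurable_pi_apply _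
  rw [Measure.map_apply hmeas (MeasurableSet.univ_pi hs)]
  set T : ι → Set NNReal := fun i => if h : ∃ k, e k = i then s h.choose else Set.univ with hT
  have hpre : (fun f : ι → NNReal => f ∘ e) ⁻¹' Set.pi Set.univ s = Set.pi Set.univ T := by
    ext f
    simp only [Set.mem_preimage, Set.mem_pi, Set.mem_univ, forall_true_left, true_implies]
    constructor
    · intro H i
      by_cases h : ∃ k, e k = i
      · have hc : e h.choose = i := h.choose_spec
        simp only [hT, dif_pos h]
        have := H h.choose
        simp only [Function.comp_apply, hc] at this
        exact this
      · simp [hT, dif_neg h]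
    · intro H k
      have h : ∃ k', e k' = e k := ⟨k, rfl⟩
      have := H (e k)
      rw [hT] at this
      simp only [dif_pos h] at this
      have hk : h.choose = k := he h.choose_spec
      rw [hk] at this
      simpa using this
  rw [hpre, Measure.pi_pi]
  have h1 : ∏ i, ν (T i) = ∏ i ∈ Finset.univ.image e, ν (T i) := by
    refine (Finset.prod_subset (Finset.subset_univ _) fun i _ hni => ?_).symm
    have h : ¬ ∃ k, e k = i := by
      rintro ⟨k, rfl⟩
      exact hni (Finset.mem_image.mpr ⟨k, Finset.mem_univ _, rfl⟩)
    simp [hT, dif_neg h]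
  rw [h1, Finset.prod_image (fun a _ b _ hab => he hab)]
  refine Finset.prod_congr rfl fun k _ => ?_
  have h : ∃ k', e k' = e k := ⟨k, rfl⟩
  have hk : h.choose = k := he h.choose_spec
  simp [hT, dif_pos h, hk]

lemma lintegral_ite_le (ν : Measure NNReal) [IsProbabilityMeasure ν] (γ : NNReal) :
    ∫⁻ c, (if γ ≤ c then (1 : ℝ≥0∞) else 0) ∂ν = ν (Set.Ici γ) := by
  rw [← lintegral_indicator_one measurableSet_Ici]
  refine lintegral_congr fun c => ?_
  simp [Set.indicator_apply, Set.mem_Ici]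

namespace FPPCL2

lemma step {n : ℕ} {r : Fin n → ℕ} {ι : Type*} [Fintype ι] [DecidableEq ι] (ν : Measure NNReal)
    [IsProbabilityMeasure ν] (t : NNReal) (g : ∀ i : Fin n, Fin (r i) → ι) (x z : ι)
    (hxz : x ≠ z) (hinj : ∀ i, Function.Injective (g i))
    (hnb : ∀ i (j j' : Fin (r i)), g i j = x → g i j' = z → False) :
    Measure.pi (fun _ : ι => ν) (evt g t)
      ≤ Measure.pi (fun _ : ι => ν) (evt (fun i j => if g i j = x then z else g i j) t) := by
  classical
  set g' : ∀ i : Fin n, Fin (r i) → ι := fun i j => if g i j = x then z else g i j with hg'def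
  rw [← lintegral_indicator_one (measurable_evt g t),
      ← lintegral_indicator_one (measurable_evt g' t)]
  have hF : Measurable ((evt g t).indicator (1 : (ι → NNReal) → ℝ≥0∞)) :=
    measurable_const.indicator (measurable_evt g t)
  have hG : Measurable ((evt g' t).indicator (1 : (ι → NNReal) → ℝ≥0∞)) :=
    measurable_const.indicator (measurable_evt g' t)
  refine lintegral_le_of_lmarginal_le {x, z} hF hG ?_
  intro f
  have hxz' : x ∉ ({z} : Finset ι) := by simpa using hxz
  rw [show ({x, z} : Finset ι) = insert x {z} from rfl]
  rw [lmarginal_insert _ hF hxz', lmarginal_insert _ hG hxz']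
  simp_rw [lmarginal_singleton]
  set Rest : Fin n → NNReal :=
    fun i => ∑ j ∈ Finset.univ.filter (fun j => g i j ≠ x ∧ g i j ≠ z), f (g i j) with hRest
  set α : NNReal :=
    (Finset.univ.filter (fun i => ∃ j, g i j = x)).sup (fun i => t - Rest i) with hα
  set β : NNReal :=
    (Finset.univ.filter (fun i => ∃ j, g i j = z)).sup (fun i => t - Rest i) with hβ
  set C : Prop := ∀ i, ¬ (∃ j, g i j = x) → ¬ (∃ j, g i j = z) → t ≤ Rest i with hC
  -- row computation helpers
  have hrowcalc : ∀ (h : ι → NNReal), (∀ w, w ≠ x → w ≠ z → h w = f w) →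
      ∀ (i : Fin n) (G : Fin (r i) → ι) (j0 : Fin (r i)) (w : ι), G j0 = w →
      (g i j0 = x ∨ g i j0 = z) →
      (∀ j, j ≠ j0 → G j = g i j ∧ g i j ≠ x ∧ g i j ≠ z) →
      ∑ j, h (G j) = h w + Rest i := by
    intro h hh i G j0 w hw hbad hrest
    rw [← Finset.add_sum_erase _ _ (Finset.mem_univ j0), hw]
    congr 1
    have hfil : Finset.univ.erase j0 =
        Finset.univ.filter (fun j => g i j ≠ x ∧ g i j ≠ z) := by
      ext j
      simp only [Finset.mem_erase, Finset.mem_univ, and_true, Finset.mem_filter, true_and]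
      constructor
      · intro hj; exact (hrest j hj).2
      · rintro ⟨h1, h2⟩ hj
        rcases hbad with hb | hb
        · exact h1 (by rw [hj]; exact hb)
        · exact h2 (by rw [hj]; exact hb)
    calc ∑ j ∈ Finset.univ.erase j0, h (G j)
        = ∑ j ∈ Finset.univ.erase j0, f (g i j) := by
          refine Finset.sum_congr rfl fun j hj => ?_
          obtain ⟨hGj, h1, h2⟩ := hrest j (Finset.mem_erase.mp hj).1
          rw [hGj, hh _ h1 h2]
      _ = Rest i := by simp only [hRest]; rw [hfil]
  have hrowneither : ∀ (h : ι → NNReal), (∀ w, w ≠ x → w ≠ z → h w = f w) →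
      ∀ (i : Fin n) (G : Fin (r i) → ι),
      (∀ j, G j = g i j ∧ g i j ≠ x ∧ g i j ≠ z) →
      ∑ j, h (G j) = Rest i := by
    intro h hh i G hG
    have hfil : Finset.univ.filter (fun j => g i j ≠ x ∧ g i j ≠ z)
        = (Finset.univ : Finset (Fin (r i))) := by
      ext j; simp [(hG j).2.1, (hG j).2.2]
    calc ∑ j, h (G j) = ∑ j, f (g i j) := by
          refine Finset.sum_congr rfl fun j _ => ?_
          obtain ⟨hGj, h1, h2⟩ := hG j
          rw [hGj, hh _ h1 h2]
      _ = Rest i := by simp only [hRest]; rw [hfil]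
  -- membership characterizations
  have hmem : ∀ a c : NNReal,
      (Function.update (Function.update f x a) z c ∈ evt g t) ↔ (C ∧ α ≤ a ∧ β ≤ c) := by
    intro a c
    set h := Function.update (Function.update f x a) z c with hh
    have hha : h x = a := by
      rw [hh, Function.update_of_ne hxz, Function.update_self]
    have hhc : h z = c := by rw [hh, Function.update_self]
    have hho : ∀ w, w ≠ x → w ≠ z → h w = f w := fun w h1 h2 => by
      rw [hh, Function.update_of_ne h2, Function.update_of_ne h1]
    simp only [evt, Set.mem_setOf_eq]
    constructor
    · intro H
      refine ⟨?_, ?_, ?_⟩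
      · intro i hx hz
        have hGp : ∀ j, g i j = g i j ∧ g i j ≠ x ∧ g i j ≠ z :=
          fun j => ⟨rfl, fun e => hx ⟨j, e⟩, fun e => hz ⟨j, e⟩⟩
        have := H i
        rwa [hrowneither h hho i (g i) hGp] at this
      · refine Finset.sup_le fun i hi => ?_
        obtain ⟨j0, hj0⟩ := (Finset.mem_filter.mp hi).2
        have hz : ¬ ∃ j, g i j = z := fun ⟨j1, hj1⟩ => hnb i j0 j1 hj0 hj1
        have hr : ∀ j, j ≠ j0 → g i j = g i j ∧ g i j ≠ x ∧ g i j ≠ z :=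
          fun j hj => ⟨rfl, fun e => hj (hinj i (e.trans hj0.symm)), fun e => hz ⟨j, e⟩⟩
        have hsum := hrowcalc h hho i (g i) j0 x hj0 (Or.inl hj0) hr
        have := H i
        rw [hsum, hha] at this
        exact tsub_le_iff_right.mpr this
      · refine Finset.sup_le fun i hi => ?_
        obtain ⟨j0, hj0⟩ := (Finset.mem_filter.mp hi).2
        have hx : ¬ ∃ j, g i j = x := fun ⟨j1, hj1⟩ => hnb i j1 j0 hj1 hj0
        have hr : ∀ j, j ≠ j0 → g i j = g i j ∧ g i j ≠ x ∧ g i j ≠ z :=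
          fun j hj => ⟨rfl, fun e => hx ⟨j, e⟩, fun e => hj (hinj i (e.trans hj0.symm))⟩
        have hsum := hrowcalc h hho i (g i) j0 z hj0 (Or.inr hj0) hr
        have := H i
        rw [hsum, hhc] at this
        exact tsub_le_iff_right.mpr this
    · rintro ⟨hCC, ha, hc⟩ i
      by_cases hx : ∃ j, g i j = x
      · obtain ⟨j0, hj0⟩ := hx
        have hz : ¬ ∃ j, g i j = z := fun ⟨j1, hj1⟩ => hnb i j0 j1 hj0 hj1
        have hr : ∀ j, j ≠ j0 → g i j = g i j ∧ g i j ≠ x ∧ g i j ≠ z :=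
          fun j hj => ⟨rfl, fun e => hj (hinj i (e.trans hj0.symm)), fun e => hz ⟨j, e⟩⟩
        rw [hrowcalc h hho i (g i) j0 x hj0 (Or.inl hj0) hr, hha]
        have h1 : t - Rest i ≤ α := by
          rw [hα]
          exact Finset.le_sup (f := fun i => t - Rest i)
            (Finset.mem_filter.mpr ⟨Finset.mem_univ _, ⟨j0, hj0⟩⟩)
        exact tsub_le_iff_right.mp (h1.trans ha)
      · by_cases hz : ∃ j, g i j = z
        · obtain ⟨j0, hj0⟩ := hz
          have hr : ∀ j, j ≠ j0 → g i j = g i j ∧ g i j ≠ x ∧ g i j ≠ z :=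
            fun j hj => ⟨rfl, fun e => hx ⟨j, e⟩, fun e => hj (hinj i (e.trans hj0.symm))⟩
          rw [hrowcalc h hho i (g i) j0 z hj0 (Or.inr hj0) hr, hhc]
          have h1 : t - Rest i ≤ β := by
            rw [hβ]
            exact Finset.le_sup (f := fun i => t - Rest i)
              (Finset.mem_filter.mpr ⟨Finset.mem_univ _, ⟨j0, hj0⟩⟩)
          exact tsub_le_iff_right.mp (h1.trans hc)
        · have hGp : ∀ j, g i j = g i j ∧ g i j ≠ x ∧ g i j ≠ z :=
            fun j => ⟨rfl, fun e => hx ⟨j, e⟩, fun e => hz ⟨j, e⟩⟩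
          rw [hrowneither h hho i (g i) hGp]
          exact hCC i hx hz
  have hmem' : ∀ a c : NNReal,
      (Function.update (Function.update f x a) z c ∈ evt g' t) ↔ (C ∧ α ≤ c ∧ β ≤ c) := by
    intro a c
    set h := Function.update (Function.update f x a) z c with hh
    have hhc : h z = c := by rw [hh, Function.update_self]
    have hho : ∀ w, w ≠ x → w ≠ z → h w = f w := fun w h1 h2 => by
      rw [hh, Function.update_of_ne h2, Function.update_of_ne h1]
    have hg'x : ∀ i j, g i j = x → g' i j = z := fun i j e => by rw [hg'def]; simp [e]
    have hg'o : ∀ i j, g i j ≠ x → g' i j = g i j := fun i j e => by rw [hg'def]; simp [e]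
    simp only [evt, Set.mem_setOf_eq]
    constructor
    · intro H
      refine ⟨?_, ?_, ?_⟩
      · intro i hx hz
        have hGp : ∀ j, g' i j = g i j ∧ g i j ≠ x ∧ g i j ≠ z :=
          fun j => ⟨hg'o i j (fun e => hx ⟨j, e⟩), fun e => hx ⟨j, e⟩, fun e => hz ⟨j, e⟩⟩
        have := H i
        rwa [hrowneither h hho i (g' i) hGp] at this
      · refine Finset.sup_le fun i hi => ?_
        obtain ⟨j0, hj0⟩ := (Finset.mem_filter.mp hi).2
        have hz : ¬ ∃ j, g i j = z := fun ⟨j1, hj1⟩ => hnb i j0 j1 hj0 hj1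
        have hr : ∀ j, j ≠ j0 → g' i j = g i j ∧ g i j ≠ x ∧ g i j ≠ z := by
          intro j hj
          have h1 : g i j ≠ x := fun e => hj (hinj i (e.trans hj0.symm))
          exact ⟨hg'o i j h1, h1, fun e => hz ⟨j, e⟩⟩
        have hsum := hrowcalc h hho i (g' i) j0 z (hg'x i j0 hj0) (Or.inl hj0) hr
        have := H i
        rw [hsum, hhc] at this
        exact tsub_le_iff_right.mpr this
      · refine Finset.sup_le fun i hi => ?_
        obtain ⟨j0, hj0⟩ := (Finset.mem_filter.mp hi).2
        have hx : ¬ ∃ j, g i j = x := fun ⟨j1, hj1⟩ => hnb i j1 j0 hj1 hj0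
        have hr : ∀ j, j ≠ j0 → g' i j = g i j ∧ g i j ≠ x ∧ g i j ≠ z := by
          intro j hj
          have h1 : g i j ≠ x := fun e => hx ⟨j, e⟩
          exact ⟨hg'o i j h1, h1, fun e => hj (hinj i (e.trans hj0.symm))⟩
        have hj0' : g' i j0 = z := by
          rw [hg'o i j0 (fun e => hx ⟨j0, e⟩)]; exact hj0
        have hsum := hrowcalc h hho i (g' i) j0 z hj0' (Or.inr hj0) hr
        have := H i
        rw [hsum, hhc] at this
        exact tsub_le_iff_right.mpr this
    · rintro ⟨hCC, ha, hc⟩ i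
      by_cases hx : ∃ j, g i j = x
      · obtain ⟨j0, hj0⟩ := hx
        have hz : ¬ ∃ j, g i j = z := fun ⟨j1, hj1⟩ => hnb i j0 j1 hj0 hj1
        have hr : ∀ j, j ≠ j0 → g' i j = g i j ∧ g i j ≠ x ∧ g i j ≠ z := by
          intro j hj
          have h1 : g i j ≠ x := fun e => hj (hinj i (e.trans hj0.symm))
          exact ⟨hg'o i j h1, h1, fun e => hz ⟨j, e⟩⟩
        rw [hrowcalc h hho i (g' i) j0 z (hg'x i j0 hj0) (Or.inl hj0) hr, hhc]
        have h1 : t - Rest i ≤ α := by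
          rw [hα]
          exact Finset.le_sup (f := fun i => t - Rest i)
            (Finset.mem_filter.mpr ⟨Finset.mem_univ _, ⟨j0, hj0⟩⟩)
        exact tsub_le_iff_right.mp (h1.trans ha)
      · by_cases hz : ∃ j, g i j = z
        · obtain ⟨j0, hj0⟩ := hz
          have hr : ∀ j, j ≠ j0 → g' i j = g i j ∧ g i j ≠ x ∧ g i j ≠ z := by
            intro j hj
            have h1 : g i j ≠ x := fun e => hx ⟨j, e⟩
            exact ⟨hg'o i j h1, h1, fun e => hj (hinj i (e.trans hj0.symm))⟩
          have hj0' : g' i j0 = z := by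
            rw [hg'o i j0 (fun e => hx ⟨j0, e⟩)]; exact hj0
          rw [hrowcalc h hho i (g' i) j0 z hj0' (Or.inr hj0) hr, hhc]
          have h1 : t - Rest i ≤ β := by
            rw [hβ]
            exact Finset.le_sup (f := fun i => t - Rest i)
              (Finset.mem_filter.mpr ⟨Finset.mem_univ _, ⟨j0, hj0⟩⟩)
          exact tsub_le_iff_right.mp (h1.trans hc)
        · have hGp : ∀ j, g' i j = g i j ∧ g i j ≠ x ∧ g i j ≠ z :=
            fun j => ⟨hg'o i j (fun e => hx ⟨j, e⟩), fun e => hx ⟨j, e⟩, fun e => hz ⟨j, e⟩⟩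
          rw [hrowneither h hho i (g' i) hGp]
          exact hCC i hx hz
  -- now compute both iterated integrals
  have hL : (∫⁻ a, ∫⁻ c,
      (evt g t).indicator (1 : (ι → NNReal) → ℝ≥0∞)
        (Function.update (Function.update f x a) z c) ∂ν ∂ν)
      = ∫⁻ a, ∫⁻ c, (if C ∧ α ≤ a ∧ β ≤ c then (1 : ℝ≥0∞) else 0) ∂ν ∂ν := by
    refine lintegral_congr fun a => lintegral_congr fun c => ?_
    rw [Set.indicator_apply]
    exact if_congr (hmem a c) rfl rfl
  have hR : (∫⁻ a, ∫⁻ c,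
      (evt g' t).indicator (1 : (ι → NNReal) → ℝ≥0∞)
        (Function.update (Function.update f x a) z c) ∂ν ∂ν)
      = ∫⁻ a, ∫⁻ c, (if C ∧ α ≤ c ∧ β ≤ c then (1 : ℝ≥0∞) else 0) ∂ν ∂ν := by
    refine lintegral_congr fun a => lintegral_congr fun c => ?_
    rw [Set.indicator_apply]
    exact if_congr (hmem' a c) rfl rfl
  rw [hL, hR]
  by_cases hCc : C
  · have hLval : (∫⁻ a, ∫⁻ c, (if C ∧ α ≤ a ∧ β ≤ c then (1 : ℝ≥0∞) else 0) ∂ν ∂ν)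
        = ν (Set.Ici α) * ν (Set.Ici β) := by
      have inner : ∀ a : NNReal, (∫⁻ c, (if C ∧ α ≤ a ∧ β ≤ c then (1 : ℝ≥0∞) else 0) ∂ν)
          = (if α ≤ a then (1 : ℝ≥0∞) else 0) * ν (Set.Ici β) := by
        intro a
        by_cases haa : α ≤ a
        · rw [if_pos haa, one_mul, ← lintegral_ite_le ν β]
          refine lintegral_congr fun c => ?_
          exact if_congr ⟨fun h => h.2.2, fun h => ⟨hCc, haa, h⟩⟩ rfl rfl
        · rw [if_neg haa, zero_mul]
          have : ∀ c : NNReal, (if C ∧ α ≤ a ∧ β ≤ c then (1 : ℝ≥0∞) else 0) = 0 := by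
            intro c; rw [if_neg]; rintro ⟨_, h1, _⟩; exact haa h1
          simp only [this, lintegral_zero]
      simp_rw [inner]
      rw [lintegral_mul_const' _ _ (measure_ne_top ν _), lintegral_ite_le ν α]
    have hRval : (∫⁻ a, ∫⁻ c, (if C ∧ α ≤ c ∧ β ≤ c then (1 : ℝ≥0∞) else 0) ∂ν ∂ν)
        = ν (Set.Ici (α ⊔ β)) := by
      have inner : (∫⁻ c, (if C ∧ α ≤ c ∧ β ≤ c then (1 : ℝ≥0∞) else 0) ∂ν)
          = ν (Set.Ici (α ⊔ β)) := by
        rw [← lintegral_ite_le ν (α ⊔ β)]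
        refine lintegral_congr fun c => ?_
        exact if_congr ⟨fun h => sup_le h.2.1 h.2.2, fun h => ⟨hCc, le_trans le_sup_left h, le_trans le_sup_right h⟩⟩ rfl rfl
      simp only [inner, lintegral_const, measure_univ, mul_one]
    rw [hLval, hRval]
    rcases le_total α β with hab | hab
    · rw [sup_eq_right.mpr hab]
      calc ν (Set.Ici α) * ν (Set.Ici β) ≤ 1 * ν (Set.Ici β) :=
            mul_le_mul_left prob_le_one _
        _ = ν (Set.Ici β) := one_mul _
    · rw [sup_eq_left.mpr hab]
      calc ν (Set.Ici α) * ν (Set.Ici β) ≤ ν (Set.Ici α) * 1 :=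
            mul_le_mul_right prob_le_one _
        _ = ν (Set.Ici α) := mul_one _
  · have hz : ∀ (P Q : Prop), (if C ∧ P ∧ Q then (1 : ℝ≥0∞) else 0) = 0 := by
      intro P Q; rw [if_neg]; rintro ⟨h, _⟩; exact hCc h
    simp [hCc]


lemma chain {n : ℕ} {r : Fin n → ℕ} {ι κ : Type*} [Fintype ι] [DecidableEq ι]
    (ν : Measure NNReal) [IsProbabilityMeasure ν] (t : NNReal)
    (q : ι → κ) (c : ι → ι) (hcc : ∀ y, c (c y) = c y) (hqc : ∀ y, q (c y) = q y) :
    ∀ (F : Finset ι) (g : ∀ i : Fin n, Fin (r i) → ι),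
      (∀ i, Function.Injective fun j => q (g i j)) →
      (∀ i j, g i j ∉ F → c (g i j) = g i j) →
      Measure.pi (fun _ : ι => ν) (evt g t)
        ≤ Measure.pi (fun _ : ι => ν) (evt (fun i j => c (g i j)) t) := by
  intro F
  induction F using Finset.induction with
  | empty =>
    intro g hg hfix
    have heq : evt (fun i j => c (g i j)) t = evt g t := by
      unfold evt
      ext f
      simp only [Set.mem_setOf_eq]
      refine forall_congr' fun i => ?_
      rw [Finset.sum_congr rfl fun j _ => by rw [hfix i j (Finset.notMem_empty _)]]
    rw [heq]
  | @insert x F hx ih =>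
    intro g hg hfix
    by_cases hcx : c x = x
    · refine ih g hg fun i j hnot => ?_
      by_cases h : g i j = x
      · rw [h, hcx]
      · exact hfix i j (by simp [Finset.mem_insert, h, hnot])
    · have hinj : ∀ i, Function.Injective (g i) :=
        fun i a b hab => hg i (congrArg q hab)
      have hnb : ∀ i (j j' : Fin (r i)), g i j = x → g i j' = c x → False := by
        intro i j j' h1 h2
        have hq1 : q (g i j) = q (g i j') := by rw [h1, h2, hqc]
        have hjj : j = j' := hg i hq1
        refine hcx ?_
        rw [← h2, ← hjj]
        exact h1
      have s1 := FPPCL2.step ν t g x (c x) (fun e => hcx e.symm) hinj hnb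
      set g1 : ∀ i : Fin n, Fin (r i) → ι :=
        fun i j => if g i j = x then c x else g i j with hg1
      have hg1inj : ∀ i, Function.Injective fun j => q (g1 i j) := by
        intro i
        have heq : (fun j => q (g1 i j)) = fun j => q (g i j) := by
          funext j
          by_cases h : g i j = x
          · simp only [hg1, if_pos h, hqc, h]
          · simp only [hg1, if_neg h]
        rw [heq]; exact hg i
      have hfix1 : ∀ i j, g1 i j ∉ F → c (g1 i j) = g1 i j := by
        intro i j hnot
        by_cases h : g i j = x
        · simp only [hg1, if_pos h]; exact hcc x
        · simp only [hg1, if_neg h] at hnot ⊢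
          exact hfix i j (by simp [Finset.mem_insert, h, hnot])
      have s2 := ih g1 hg1inj hfix1
      have heq : (fun i j => c (g1 i j)) = fun i j => c (g i j) := by
        funext i j
        by_cases h : g i j = x
        · simp only [hg1, if_pos h, hcc, h]
        · simp only [hg1, if_neg h]
      rw [heq] at s2
      exact le_trans s1 s2

lemma absLe {n : ℕ} {r : Fin n → ℕ} {ι κ : Type*} [Fintype ι] [Fintype κ] [DecidableEq ι]
    (ν : Measure NNReal) [IsProbabilityMeasure ν] (t : NNReal)
    (q : ι → κ) (hq : Function.Surjective q) (g : ∀ i : Fin n, Fin (r i) → ι)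
    (hg : ∀ i, Function.Injective fun j => q (g i j)) :
    Measure.pi (fun _ : ι => ν) (evt g t)
      ≤ Measure.pi (fun _ : κ => ν) (evt (fun i j => q (g i j)) t) := by
  classical
  set s : κ → ι := Function.surjInv hq with hs
  have hqs : ∀ k, q (s k) = k := fun k => Function.surjInv_eq hq k
  have hsi : Function.Injective s := Function.injective_surjInv hq
  have h1 := chain ν t q (fun y => s (q y))
    (fun y => by show s (q (s (q y))) = s (q y); rw [hqs])
    (fun y => by show q (s (q y)) = q y; rw [hqs])
    Finset.univ g hg (fun i j h => absurd (Finset.mem_univ _) h)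
  have hmeas : Measurable fun f : ι → NNReal => f ∘ s :=
    measurable_pi_iff.mpr fun k => measurable_pi_apply _
  have h2 : evt (fun i j => s (q (g i j))) t
      = (fun f : ι → NNReal => f ∘ s) ⁻¹' (evt (fun i j => q (g i j)) t) := rfl
  calc Measure.pi (fun _ : ι => ν) (evt g t)
      ≤ Measure.pi (fun _ : ι => ν) (evt (fun i j => s (q (g i j))) t) := h1
    _ = Measure.pi (fun _ : κ => ν) (evt (fun i j => q (g i j)) t) := by
        rw [h2, ← Measure.map_apply hmeas (measurable_evt _ t), map_pi_comp ν hsi]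

end FPPCL2
end FPPCL

namespace FPPCL

/-- For a partition (setoid) `S` of the index set `I = Σ i : Fin n, Fin (r i)`, the
probability that, with i.i.d. `ν`-distributed times `(t_B : B ∈ S)` attached to the
blocks, every row sum `Σ_j t_{π_S(i,j)}` is at least `t`. -/
noncomputable def partitionProb {n : ℕ} {r : Fin n → ℕ} (ν : Measure NNReal)
    (S : Setoid ((i : Fin n) × Fin (r i))) (t : NNReal) : ENNReal :=
  letI : Fintype (Quotient S) := Fintype.ofFinite _
  Measure.pi (fun _ : Quotient S => ν)
    {f | ∀ i : Fin n, t ≤ ∑ j : Fin (r i), f (Quotient.mk S ⟨i, j⟩)}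

/-- partition refinement decreases intersection probabilities:
if `S` is a partition of `I = {(i,j) : 1 ≤ i ≤ n, 1 ≤ j ≤ r_i}` whose blocks meet
each row at most once, and `S′` is a refinement of `S` with the same property, then
for every `t ≥ 0` we have `P^{(S)} ≥ P^{(S′)}`. -/
theorem partition_refinement_decreases_probability
    (n : ℕ) (r : Fin n → ℕ) (ν : Measure NNReal) [IsProbabilityMeasure ν]
    (S S' : Setoid ((i : Fin n) × Fin (r i)))
    (hS : ∀ a b : (i : Fin n) × Fin (r i), S.r a b → a.1 = b.1 → a = b)
    (hS' : ∀ a b : (i : Fin n) × Fin (r i), S'.r a b → a.1 = b.1 → a = b)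
    (href : ∀ a b : (i : Fin n) × Fin (r i), S'.r a b → S.r a b)
    (t : NNReal) :
    partitionProb ν S' t ≤ partitionProb ν S t := by
  classical
  letI : Fintype (Quotient S) := Fintype.ofFinite _
  letI : Fintype (Quotient S') := Fintype.ofFinite _
  set q : Quotient S' → Quotient S :=
    Quotient.lift (Quotient.mk S) (fun a b hab => Quotient.sound (href a b hab)) with hqdef
  have hq : Function.Surjective q := by
    intro b
    induction b using Quotient.ind with
    | _ a => exact ⟨Quotient.mk S' a, rfl⟩
  have hg : ∀ i, Function.Injective fun j : Fin (r i) => q (Quotient.mk S' ⟨i, j⟩) := by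
    intro i a b hab
    have h : Quotient.mk S ⟨i, a⟩ = Quotient.mk S ⟨i, b⟩ := hab
    have h2 := hS _ _ (Quotient.exact h) rfl
    exact eq_of_heq (Sigma.mk.inj_iff.mp h2).2
  exact FPPCL2.absLe ν t q hq (fun i (j : Fin (r i)) => Quotient.mk S' ⟨i, j⟩) hg


end FPPCL
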